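/- Assume j(s,|ξ|) is C¹, with {|ξ| ↦ j(s,|ξ|)} convex and increasing for each s, j(s,0) = 0, and 0 ≤ j(s,|ξ|) ≤ α(|s|)|ξ|² for a positive increasing continuous function α. Then |j_ξ(s,ξ)| ≤ 4α(|s|)|ξ| for every s ∈ ℝ and ξ ∈ ℝ^N. -/

import Mathlib

/-- if `t ↦ j(s,t)` is convex, increasing, differentiable with `j(s,0)=0`
and `0 ≤ j(s,t) ≤ α(|s|) t²`, with `α` positive, increasing and continuous, then the
derivative satisfies `|∂_t j(s,t)| ≤ 4 α(|s|) t` for all `s` and `t ≥ 0` (i.e.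
`|j_ξ(s,ξ)| ≤ 4 α(|s|)|ξ|`). -/
theorem stmt12 (j : ℝ → ℝ → ℝ) (α : ℝ → ℝ)
    (hα_pos : ∀ s, 0 < α s) (hα_mono : Monotone α) (hα_cont : Continuous α)
    (hconv : ∀ s, ConvexOn ℝ (Set.Ici 0) (j s))
    (hmono : ∀ s, MonotoneOn (j s) (Set.Ici 0))
    (hdiff : ∀ s : ℝ, ∀ t : ℝ, 0 ≤ t → DifferentiableAt ℝ (j s) t)
    (hzero : ∀ s, j s 0 = 0)
    (hbound : ∀ s t : ℝ, 0 ≤ t → 0 ≤ j s t ∧ j s t ≤ α |s| * t ^ 2) :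
    ∀ s t : ℝ, 0 ≤ t → |deriv (j s) t| ≤ 4 * α |s| * t := by
  intro s t ht
  rcases ht.eq_or_lt with rfl | htpos
  · -- t = 0 : show deriv = 0
    have hzero' : deriv (j s) 0 = 0 := by
      have hupper : ∀ y : ℝ, 0 < y → deriv (j s) 0 ≤ α |s| * y := by
        intro y hy
        have hslope := (hconv s).deriv_le_slope (Set.self_mem_Ici)
          (Set.mem_Ici.2 hy.le) hy (hdiff s 0 le_rfl)
        have : slope (j s) 0 y = j s y / y := by
          simp [slope_def_field, hzero s, div_eq_inv_mul]
        rw [this] at hslope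
        have hb := (hbound s y hy.le).2
        calc deriv (j s) 0 ≤ j s y / y := hslope
          _ ≤ α |s| * y ^ 2 / y := by gcongr
          _ = α |s| * y := by field_simp
      have hle0 : deriv (j s) 0 ≤ 0 := by
        refine le_of_forall_pos_le_add fun ε hε => ?_
        have hy : (0:ℝ) < ε / α |s| := div_pos hε (hα_pos _)
        have := hupper _ hy
        rw [mul_div_cancel₀ _ (hα_pos |s|).ne'] at this
        linarith
      have hge0 : 0 ≤ deriv (j s) 0 := by
        have hd := ((hdiff s 0 le_rfl).hasDerivAt)
        have htend : Filter.Tendsto (slope (j s) 0) (nhdsWithin 0 (Set.Ioi 0))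
            (nhds (deriv (j s) 0)) := by
          have := hasDerivAt_iff_tendsto_slope.mp hd
          exact this.mono_left (nhdsWithin_mono _ (fun x hx => ne_of_gt hx))
        refine ge_of_tendsto htend ?_
        filter_upwards [self_mem_nhdsWithin] with y hy
        have hy' : (0:ℝ) < y := hy
        have := (hbound s y hy'.le).1
        rw [slope_def_field]
        have : 0 ≤ j s y / y := div_nonneg this hy'.le
        simpa [hzero s] using this
      simp [le_antisymm hle0 hge0]
    simp [hzero']
  · -- t > 0
    have h2t : t < 2 * t := by linarith
    have hge : 0 ≤ deriv (j s) t := by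
      have hslope := (hconv s).slope_le_deriv (Set.self_mem_Ici)
        (Set.mem_Ici.2 htpos.le) htpos (hdiff s t htpos.le)
      have : slope (j s) 0 t = j s t / t := by
        simp [slope_def_field, hzero s, div_eq_inv_mul]
      rw [this] at hslope
      exact le_trans (div_nonneg (hbound s t htpos.le).1 htpos.le) hslope
    have hle : deriv (j s) t ≤ 4 * α |s| * t := by
      have hslope := (hconv s).deriv_le_slope (Set.mem_Ici.2 htpos.le)
        (Set.mem_Ici.2 (by linarith : (0:ℝ) ≤ 2 * t)) h2t (hdiff s t htpos.le)
      have hs : slope (j s) t (2 * t) = (j s (2 * t) - j s t) / t := by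
        rw [slope_def_field]; ring_nf
      rw [hs] at hslope
      have hb2 := (hbound s (2 * t) (by linarith)).2
      have hb1 := (hbound s t htpos.le).1
      have : (j s (2 * t) - j s t) / t ≤ 4 * α |s| * t := by
        rw [div_le_iff₀ htpos]
        nlinarith
      linarith
    rw [abs_of_nonneg hge]
    exact hle
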